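/- Let k0 > 0 and v ∈ ℝ³. If there exists a nonempty open set A ⊆ B such that e^{i⟨v, h(k)⟩} = 1 for all k ∈ A, then v = 0. (This expresses the uniqueness in Theorem 5.3(ii): when R_s·e3 = ±R_t·e3, the relative translation R_sᵀR_t·d_t − d_s is uniquely determined by the phase relation on the hemisphere.) -/

import Mathlib

noncomputable section
open Real Set MeasureTheory
open scoped RealInnerProductSpace

abbrev R3 : Type := EuclideanSpace ℝ (Fin 3)
abbrev R2 : Type := EuclideanSpace ℝ (Fin 2)
abbrev Mat3 : Type := Matrix (Fin 3) (Fin 3) ℝ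

def SO3 (R : Mat3) : Prop := R.transpose * R = 1 ∧ R.det = 1

def e3 : R3 := WithLp.toLp 2 (![0, 0, 1] : Fin 3 → ℝ)

def act3 (R : Mat3) (x : R3) : R3 := WithLp.toLp 2 (R.mulVec x)

def cross3 (x y : R3) : R3 := WithLp.toLp 2 (crossProduct x y)

def rotE3 (R : Mat3) : R3 := act3 R e3

def v1 (Rs Rt : Mat3) : R3 := ‖rotE3 Rs + rotE3 Rt‖⁻¹ • (rotE3 Rs + rotE3 Rt)

def v2 (Rs Rt : Mat3) : R3 :=
  ‖cross3 (rotE3 Rs) (rotE3 Rt)‖⁻¹ • cross3 (rotE3 Rs) (rotE3 Rt)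

def v3 (Rs Rt : Mat3) : R3 := ‖rotE3 Rs - rotE3 Rt‖⁻¹ • (rotE3 Rs - rotE3 Rt)

def aRad (k0 : ℝ) (Rs Rt : Mat3) : ℝ := k0 / 2 * ‖rotE3 Rs + rotE3 Rt‖

def sigmaArc (k0 : ℝ) (Rs Rt : Mat3) (β : ℝ) : R3 :=
  (aRad k0 Rs Rt * (Real.cos β - 1)) • v1 Rs Rt + (aRad k0 Rs Rt * Real.sin β) • v2 Rs Rt

def cST (Rs Rt : Mat3) : ℝ := ⟪rotE3 Rs, rotE3 Rt⟫

def Jset (Rs Rt : Mat3) : Set ℝ :=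
  if cST Rs Rt ≤ 0 then Ioc (-π) π
  else Ioo (-(Real.arccos ((cST Rs Rt - 1) / (cST Rs Rt + 1))))
    (Real.arccos ((cST Rs Rt - 1) / (cST Rs Rt + 1)))

def kappa (k0 : ℝ) (k : R2) : ℝ := Real.sqrt (k0 ^ 2 - ‖k‖ ^ 2)

def hmap (k0 : ℝ) (k : R2) : R3 := WithLp.toLp 2 (![k 0, k 1, kappa k0 k - k0] : Fin 3 → ℝ)

def ball2 (k0 : ℝ) : Set R2 := {k | ‖k‖ < k0}

def Hemi (k0 : ℝ) (R : Mat3) : Set R3 := (fun k => act3 R (hmap k0 k)) '' ball2 k0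

lemma norm_sq_R2 (k : R2) : ‖k‖ ^ 2 = k 0 ^ 2 + k 1 ^ 2 := by
  rw [EuclideanSpace.norm_eq, Real.sq_sqrt (by positivity)]
  simp [Fin.sum_univ_two, sq_abs]

lemma inner_hmap (k0 : ℝ) (v : R3) (k : R2) :
    ⟪v, hmap k0 k⟫ = v 0 * k 0 + v 1 * k 1 + v 2 * (kappa k0 k - k0) := by
  simp [hmap, PiLp.inner_apply, Fin.sum_univ_three]
  ring

lemma cont_f (k0 : ℝ) (v : R3) : Continuous (fun k : R2 => (⟪v, hmap k0 k⟫ : ℝ)) := by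
  simp only [inner_hmap, kappa]
  fun_prop

lemma sqrt_sum_lt (A B M r : ℝ) (hr : 0 < r) (h1 : 0 < A) (h2 : 0 < B) (h3 : 0 < M)
    (hAB : A + B = 2*M - r^2/2) : Real.sqrt A + Real.sqrt B < 2 * Real.sqrt M := by
  have hprod : 2 * Real.sqrt A * Real.sqrt B ≤ A + B := by
    nlinarith [sq_nonneg (Real.sqrt A - Real.sqrt B), Real.sq_sqrt h1.le, Real.sq_sqrt h2.le]
  apply lt_of_pow_lt_pow_left₀ 2 (by positivity)
  have e : (2 * Real.sqrt M)^2 = 4 * M := by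
    rw [mul_pow, Real.sq_sqrt h3.le]; ring
  rw [e]
  nlinarith [Real.sq_sqrt h1.le, Real.sq_sqrt h2.le, mul_pos hr hr]

lemma aux_zero (v0 v2 c u r : ℝ) (hr : 0 < r)
    (h1 : 0 < c - (u + r/2)^2) (h2 : 0 < c - (u - r/2)^2) (h3 : 0 < c - u^2)
    (e1 : v0 * (r/2) + v2 * (Real.sqrt (c - (u + r/2)^2) - Real.sqrt (c - u^2)) = 0)
    (e2 : v0 * (-(r/2)) + v2 * (Real.sqrt (c - (u - r/2)^2) - Real.sqrt (c - u^2)) = 0) :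
    v0 = 0 ∧ v2 = 0 := by
  have key := sqrt_sum_lt _ _ _ r hr h1 h2 h3 (by ring)
  have hv2 : v2 = 0 := by
    have h0 : v2 * (Real.sqrt (c - (u + r/2)^2) + Real.sqrt (c - (u - r/2)^2)
        - 2 * Real.sqrt (c - u^2)) = 0 := by linarith [e1, e2]
    rcases mul_eq_zero.mp h0 with h | h
    · exact h
    · linarith
  refine ⟨?_, hv2⟩
  rw [hv2] at e1
  nlinarith [e1]

/-- uniqueness of the relative translation, degenerate case.
If `e^{i⟨v, h(k)⟩} = 1` for all `k` in a nonempty open subset `A` of the disk `B`, then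
`v = 0`. -/
theorem translation_uniqueness_degenerate (k0 : ℝ) (hk0 : 0 < k0) (v : R3)
    (A : Set R2) (hA : IsOpen A) (hAne : A.Nonempty) (hAB : A ⊆ ball2 k0)
    (hphase : ∀ k ∈ A, Complex.exp (Complex.I * (⟪v, hmap k0 k⟫ : ℝ)) = 1) :
    v = 0 := by
  classical
  set f : R2 → ℝ := fun k => ⟪v, hmap k0 k⟫ with hfdef
  have hfZ : ∀ k ∈ A, ∃ n : ℤ, f k = n * (2 * π) := by
    intro k hk
    obtain ⟨n, hn⟩ := Complex.exp_eq_one_iff.mp (hphase k hk)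
    refine ⟨n, ?_⟩
    have h2 : (f k : ℂ) = (n : ℂ) * (2 * π) := by
      apply mul_left_cancel₀ Complex.I_ne_zero
      rw [hn]; ring
    exact_mod_cast h2
  obtain ⟨a, ha⟩ := hAne
  obtain ⟨r, hr, hball⟩ := Metric.isOpen_iff.mp hA a ha
  have hcont : ContinuousOn f (Metric.ball a r) := (cont_f k0 v).continuousOn
  have hconn : IsPreconnected (Metric.ball a r) := (convex_ball a r).isPreconnected
  have hmem : a ∈ Metric.ball a r := Metric.mem_ball_self hr
  have hπ := Real.pi_pos
  -- f is constant on the ball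
  have hconst : ∀ b ∈ Metric.ball a r, f b = f a := by
    intro b hb
    obtain ⟨na, hna⟩ := hfZ a ha
    obtain ⟨nb, hnb⟩ := hfZ b (hball hb)
    rcases lt_trichotomy na nb with h | h | h
    · exfalso
      have hcast : (na : ℝ) + 1 ≤ nb := by exact_mod_cast h
      have hc : f a + π ∈ Icc (f a) (f b) := by
        refine ⟨by linarith, ?_⟩
        rw [hna, hnb]; nlinarith
      obtain ⟨z, hz, hfz⟩ := hconn.intermediate_value hmem hb hcont hc
      obtain ⟨nz, hnz⟩ := hfZ z (hball hz)
      rw [hnz, hna] at hfz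
      have h1 : ((2*(nz - na) : ℤ) : ℝ) * π = 1 * π := by push_cast; linarith
      have h3 : (2*(nz - na) : ℤ) = 1 := by
        exact_mod_cast mul_right_cancel₀ (ne_of_gt hπ) h1
      omega
    · rw [hnb, hna, h]
    · exfalso
      have hcast : (nb : ℝ) + 1 ≤ na := by exact_mod_cast h
      have hc : f a - π ∈ Icc (f b) (f a) := by
        refine ⟨?_, by linarith⟩
        rw [hna, hnb]; nlinarith
      obtain ⟨z, hz, hfz⟩ := hconn.intermediate_value hb hmem hcont hc
      obtain ⟨nz, hnz⟩ := hfZ z (hball hz)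
      rw [hnz, hna] at hfz
      have h1 : ((2*(na - nz) : ℤ) : ℝ) * π = 1 * π := by push_cast; linarith
      have h3 : (2*(na - nz) : ℤ) = 1 := by
        exact_mod_cast mul_right_cancel₀ (ne_of_gt hπ) h1
      omega
  -- points a + t • eᵢ lie in the ball
  have hmemball : ∀ (i : Fin 2) (t : ℝ), |t| < r →
      a + t • EuclideanSpace.single i (1:ℝ) ∈ Metric.ball a r := by
    intro i t ht
    rw [Metric.mem_ball, dist_eq_norm, add_sub_cancel_left, norm_smul,
      EuclideanSpace.norm_single]
    simpa using ht
  have hpos : ∀ k ∈ A, 0 < k0^2 - (k 0 ^ 2 + k 1 ^ 2) := by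
    intro k hk
    have h1 : ‖k‖ < k0 := hAB hk
    have h2 : ‖k‖ ^ 2 < k0 ^ 2 := by nlinarith [norm_nonneg k]
    rw [norm_sq_R2] at h2
    linarith
  have hrr : |r/2| < r := by rw [abs_of_pos (by linarith)]; linarith
  have hrr' : |(-(r/2))| < r := by rw [abs_neg, abs_of_pos (by linarith)]; linarith
  -- equation along direction 0
  have heq0 : ∀ t : ℝ, |t| < r →
      v 0 * t + v 2 * (Real.sqrt ((k0^2 - a 1 ^ 2) - (a 0 + t)^2)
        - Real.sqrt ((k0^2 - a 1 ^ 2) - a 0 ^ 2)) = 0 := by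
    intro t ht
    have hb := hmemball 0 t ht
    have h := hconst _ hb
    simp only [hfdef] at h
    rw [inner_hmap, inner_hmap] at h
    have c0 : (a + t • EuclideanSpace.single (0:Fin 2) (1:ℝ)) 0 = a 0 + t := by
      simp [EuclideanSpace.single_apply]
    have c1 : (a + t • EuclideanSpace.single (0:Fin 2) (1:ℝ)) 1 = a 1 := by
      simp [EuclideanSpace.single_apply]
    rw [kappa, kappa, norm_sq_R2, norm_sq_R2, c0, c1,
      show k0^2 - ((a 0 + t)^2 + a 1 ^ 2) = (k0^2 - a 1 ^ 2) - (a 0 + t)^2 by ring,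
      show k0^2 - (a 0 ^ 2 + a 1 ^ 2) = (k0^2 - a 1 ^ 2) - a 0 ^ 2 by ring] at h
    linear_combination h
  -- equation along direction 1
  have heq1 : ∀ t : ℝ, |t| < r →
      v 1 * t + v 2 * (Real.sqrt ((k0^2 - a 0 ^ 2) - (a 1 + t)^2)
        - Real.sqrt ((k0^2 - a 0 ^ 2) - a 1 ^ 2)) = 0 := by
    intro t ht
    have hb := hmemball 1 t ht
    have h := hconst _ hb
    simp only [hfdef] at h
    rw [inner_hmap, inner_hmap] at h
    have c0 : (a + t • EuclideanSpace.single (1:Fin 2) (1:ℝ)) 0 = a 0 := by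
      simp [EuclideanSpace.single_apply]
    have c1 : (a + t • EuclideanSpace.single (1:Fin 2) (1:ℝ)) 1 = a 1 + t := by
      simp [EuclideanSpace.single_apply]
    rw [kappa, kappa, norm_sq_R2, norm_sq_R2, c0, c1,
      show k0^2 - (a 0 ^ 2 + (a 1 + t)^2) = (k0^2 - a 0 ^ 2) - (a 1 + t)^2 by ring,
      show k0^2 - (a 0 ^ 2 + a 1 ^ 2) = (k0^2 - a 0 ^ 2) - a 1 ^ 2 by ring] at h
    linear_combination h
  -- positivity at the perturbed points, direction 0
  have hp0p : 0 < (k0^2 - a 1 ^ 2) - (a 0 + r/2)^2 := by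
    have hb := hmemball 0 (r/2) hrr
    have := hpos _ (hball hb)
    have c0 : (a + (r/2) • EuclideanSpace.single (0:Fin 2) (1:ℝ)) 0 = a 0 + r/2 := by
      simp [EuclideanSpace.single_apply]
    have c1 : (a + (r/2) • EuclideanSpace.single (0:Fin 2) (1:ℝ)) 1 = a 1 := by
      simp [EuclideanSpace.single_apply]
    rw [c0, c1] at this; linarith
  have hp0m : 0 < (k0^2 - a 1 ^ 2) - (a 0 - r/2)^2 := by
    have hb := hmemball 0 (-(r/2)) hrr'
    have := hpos _ (hball hb)
    have c0 : (a + (-(r/2)) • EuclideanSpace.single (0:Fin 2) (1:ℝ)) 0 = a 0 - r/2 := by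
      simp [EuclideanSpace.single_apply]; ring
    have c1 : (a + (-(r/2)) • EuclideanSpace.single (0:Fin 2) (1:ℝ)) 1 = a 1 := by
      simp [EuclideanSpace.single_apply]
    rw [c0, c1] at this
    nlinarith [this]
  have hp00 : 0 < (k0^2 - a 1 ^ 2) - a 0 ^ 2 := by
    have := hpos _ ha; linarith
  have hp1p : 0 < (k0^2 - a 0 ^ 2) - (a 1 + r/2)^2 := by
    have hb := hmemball 1 (r/2) hrr
    have := hpos _ (hball hb)
    have c0 : (a + (r/2) • EuclideanSpace.single (1:Fin 2) (1:ℝ)) 0 = a 0 := by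
      simp [EuclideanSpace.single_apply]
    have c1 : (a + (r/2) • EuclideanSpace.single (1:Fin 2) (1:ℝ)) 1 = a 1 + r/2 := by
      simp [EuclideanSpace.single_apply]
    rw [c0, c1] at this; linarith
  have hp1m : 0 < (k0^2 - a 0 ^ 2) - (a 1 - r/2)^2 := by
    have hb := hmemball 1 (-(r/2)) hrr'
    have := hpos _ (hball hb)
    have c0 : (a + (-(r/2)) • EuclideanSpace.single (1:Fin 2) (1:ℝ)) 0 = a 0 := by
      simp [EuclideanSpace.single_apply]
    have c1 : (a + (-(r/2)) • EuclideanSpace.single (1:Fin 2) (1:ℝ)) 1 = a 1 - r/2 := by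
      simp [EuclideanSpace.single_apply]; ring
    rw [c0, c1] at this
    nlinarith [this]
  have hp10 : 0 < (k0^2 - a 0 ^ 2) - a 1 ^ 2 := by
    have := hpos _ ha; linarith
  -- apply aux_zero in both directions
  have e0p := heq0 (r/2) hrr
  have e0m := heq0 (-(r/2)) hrr'
  rw [show a 0 + -(r/2) = a 0 - r/2 by ring] at e0m
  obtain ⟨h0, h2⟩ := aux_zero (v 0) (v 2) (k0^2 - a 1 ^ 2) (a 0) r hr hp0p hp0m hp00 e0p e0m
  have e1p := heq1 (r/2) hrr
  have e1m := heq1 (-(r/2)) hrr'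
  rw [show a 1 + -(r/2) = a 1 - r/2 by ring] at e1m
  obtain ⟨h1, _⟩ := aux_zero (v 1) (v 2) (k0^2 - a 0 ^ 2) (a 1) r hr hp1p hp1m hp10 e1p e1m
  ext i
  fin_cases i <;> simpa [h0, h1, h2]
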